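/- Let R be a ring and M a nonzero finitely presented left R-module with Hom_R(M,R) = 0. Then the Auslander–Bridger transpose Tr M (the cokernel of f* : P_0* → P_1* for a finite free presentation P_1 →f P_0 → M → 0) is a finitely presented right R-module of projective dimension exactly 1. -/

import Mathlib

open LinearMap

/-- Precomposition with `f` on duals, as a map of right `R`-modules
(`Rᵐᵒᵖ`-modules): this is `f* : P₀* → P₁*`. -/
def dualPrecomp {R : Type*} [Ring R] {M N : Type*}
    [AddCommGroup M] [Module R M] [AddCommGroup N] [Module R N]
    (f : M →ₗ[R] N) : (N →ₗ[R] R) →ₗ[Rᵐᵒᵖ] (M →ₗ[R] R) where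
  toFun g := g.comp f
  map_add' g h := by ext; simp
  map_smul' c g := by ext; simp

open MulOpposite

lemma dual_eval_eq_sum {R : Type} [Ring R] {m : ℕ} (φ : (Fin m → R) →ₗ[R] R) (u : Fin m → R) :
    φ u = ∑ i, u i * φ (Pi.single i 1) := by
  have h := LinearMap.pi_apply_eq_sum_univ φ u
  have e : ∀ i : Fin m, (fun j => if i = j then (1:R) else 0) = Pi.single i 1 := by
    intro i; ext j; simp [Pi.single_apply, eq_comm]
  simp only [e, smul_eq_mul] at h
  exact h

lemma dual_repr {R : Type} [Ring R] {m : ℕ} (φ : (Fin m → R) →ₗ[R] R) :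
    φ = ∑ i, op (φ (Pi.single i 1)) • (LinearMap.proj i : (Fin m → R) →ₗ[R] R) := by
  refine LinearMap.ext fun u => ?_
  rw [dual_eval_eq_sum φ u]
  simp [LinearMap.smul_apply, MulOpposite.smul_eq_mul_unop, Finset.sum_apply]

def dualEquiv (R : Type) [Ring R] (k : ℕ) :
    ((Fin k → R) →ₗ[R] R) ≃ₗ[Rᵐᵒᵖ] (Fin k → Rᵐᵒᵖ) where
  toFun g := fun i => op (g (Pi.single i 1))
  map_add' g h := by ext i; simp
  map_smul' c g := by
    ext i
    simp [LinearMap.smul_apply, MulOpposite.smul_eq_mul_unop]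
  invFun y :=
    { toFun := fun u => ∑ i, u i * (y i).unop
      map_add' := fun u v => by simp [add_mul, Finset.sum_add_distrib]
      map_smul' := fun c u => by simp [smul_eq_mul, mul_assoc, Finset.mul_sum] }
  left_inv g := LinearMap.ext fun u => (dual_eval_eq_sum g u).symm
  right_inv y := by
    ext i
    simp [Pi.single_apply]

/-- If `M` is a nonzero finitely presented left module over a ring
`R` (presented by `f : P₁ = R^m → P₀ = R^n` with `M ≅ coker f`) with
`Hom_R(M, R) = 0`, then the Auslander–Bridger transpose
`Tr M = coker (f* : P₀* → P₁*)` is a finitely presented right `R`-module of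
projective dimension exactly `1` (i.e. it is not projective, and it is a
quotient of the projective module `P₁*` by the projective submodule
`range f*`). -/
theorem transpose_fp_pd_one (R : Type) [Ring R] (m n : ℕ)
    (f : (Fin m → R) →ₗ[R] (Fin n → R))
    (M : Type) [AddCommGroup M] [Module R M]
    (pres : M ≃ₗ[R] ((Fin n → R) ⧸ LinearMap.range f))
    (hM : Nontrivial M)
    (hhom : ∀ g : M →ₗ[R] R, g = 0) :
    Module.FinitePresentation Rᵐᵒᵖ
        (((Fin m → R) →ₗ[R] R) ⧸ LinearMap.range (dualPrecomp f)) ∧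
    Module.Projective Rᵐᵒᵖ ((Fin m → R) →ₗ[R] R) ∧
    Module.Projective Rᵐᵒᵖ ↥(LinearMap.range (dualPrecomp f)) ∧
    ¬ Module.Projective Rᵐᵒᵖ
        (((Fin m → R) →ₗ[R] R) ⧸ LinearMap.range (dualPrecomp f)) := by
  set F := dualPrecomp f with hF
  -- injectivity of F from Hom(M,R) = 0
  have hinj : Function.Injective F := by
    rw [← LinearMap.ker_eq_bot]
    rw [LinearMap.ker_eq_bot']
    intro g hg
    have hle : LinearMap.range f ≤ ker g := by
      rintro x ⟨y, rfl⟩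
      have : (g.comp f) y = 0 := by
        rw [show g.comp f = 0 from hg]; rfl
      simpa using this
    set gbar := (LinearMap.range f).liftQ g hle with hgbar
    have hg0 : gbar ∘ₗ (pres : M →ₗ[R] ((Fin n → R) ⧸ LinearMap.range f)) = 0 := hhom _
    have hbar : gbar = 0 := by
      refine LinearMap.ext fun q => ?_
      obtain ⟨x, rfl⟩ := pres.surjective q
      simpa using LinearMap.congr_fun hg0 x
    have hgq : g = gbar ∘ₗ (LinearMap.range f).mkQ := by
      refine LinearMap.ext fun x => ?_
      simp [hgbar]
    rw [hgq, hbar]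
    simp
  have proj1 : Module.Projective Rᵐᵒᵖ ((Fin m → R) →ₗ[R] R) :=
    Module.Projective.of_equiv (dualEquiv R m).symm
  have projrange : Module.Projective Rᵐᵒᵖ ↥(LinearMap.range F) :=
    Module.Projective.of_equiv ((dualEquiv R n).symm.trans (LinearEquiv.ofInjective F hinj))
  -- finite presentation
  have hfgrange : (LinearMap.range F).FG := by
    have : LinearMap.range F =
        Submodule.map (F ∘ₗ (dualEquiv R n).symm.toLinearMap) ⊤ := by
      rw [Submodule.map_top, LinearMap.range_comp, LinearEquiv.range, Submodule.map_top]
    rw [this]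
    exact Submodule.FG.map _ (Module.Finite.fg_top (R := Rᵐᵒᵖ) (M := Fin n → Rᵐᵒᵖ))
  have fp : Module.FinitePresentation Rᵐᵒᵖ
      (((Fin m → R) →ₗ[R] R) ⧸ LinearMap.range F) := by
    refine Module.finitePresentation_of_surjective
      ((LinearMap.range F).mkQ ∘ₗ (dualEquiv R m).symm.toLinearMap)
      ((Submodule.mkQ_surjective _).comp (dualEquiv R m).symm.surjective) ?_
    have hker : ker ((LinearMap.range F).mkQ ∘ₗ (dualEquiv R m).symm.toLinearMap)
        = Submodule.map (dualEquiv R m).toLinearMap (LinearMap.range F) := by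
      rw [LinearMap.ker_comp, Submodule.ker_mkQ]
      ext y
      constructor
      · intro hy
        exact ⟨(dualEquiv R m).symm y, hy, by simp⟩
      · rintro ⟨g, hg, rfl⟩
        simpa using hg
    rw [hker]
    exact Submodule.FG.map _ hfgrange
  refine ⟨fp, proj1, projrange, ?_⟩
  intro hproj
  obtain ⟨s, hs⟩ := Module.projective_lifting_property (LinearMap.range F).mkQ
    (LinearMap.id) (Submodule.mkQ_surjective _)
  set φ := (LinearMap.id : ((Fin m → R) →ₗ[R] R) →ₗ[Rᵐᵒᵖ] ((Fin m → R) →ₗ[R] R))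
      - s ∘ₗ (LinearMap.range F).mkQ with hφ
  have hφmem : ∀ x, φ x ∈ LinearMap.range F := by
    intro x
    rw [← Submodule.ker_mkQ (LinearMap.range F), LinearMap.mem_ker]
    have h := LinearMap.congr_fun hs ((LinearMap.range F).mkQ x)
    simp only [LinearMap.comp_apply, LinearMap.id_apply] at h
    simp only [hφ, LinearMap.sub_apply, LinearMap.id_apply, LinearMap.comp_apply, map_sub,
      sub_eq_zero]
    exact h.symm
  set φ' := φ.codRestrict (LinearMap.range F) hφmem with hφ'
  set r := (LinearEquiv.ofInjective F hinj).symm.toLinearMap ∘ₗ φ' with hr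
  have hrF : ∀ g, r (F g) = g := by
    intro g
    have h1 : φ (F g) = F g := by
      have : (LinearMap.range F).mkQ (F g) = 0 := by
        rw [← LinearMap.mem_ker, Submodule.ker_mkQ]
        exact ⟨g, rfl⟩
      simp [hφ, this]
    have h2 : φ' (F g) = (LinearEquiv.ofInjective F hinj) g := by
      apply Subtype.ext
      simp [hφ', LinearMap.codRestrict_apply, h1, LinearEquiv.ofInjective_apply]
    simp [hr, h2]
  -- f is surjective
  have hsurj : Function.Surjective f := by
    intro x
    refine ⟨fun i => r (LinearMap.proj i) x, ?_⟩
    funext j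
    have hrep : F (LinearMap.proj j : (Fin n → R) →ₗ[R] R)
        = ∑ i, op (f (Pi.single i 1) j) • (LinearMap.proj i : (Fin m → R) →ₗ[R] R) := by
      have h3 := dual_repr (F (LinearMap.proj j : (Fin n → R) →ₗ[R] R))
      simpa [hF, dualPrecomp] using h3
    have key : (LinearMap.proj j : (Fin n → R) →ₗ[R] R)
        = ∑ i, op (f (Pi.single i 1) j) • r (LinearMap.proj i : (Fin m → R) →ₗ[R] R) := by
      calc (LinearMap.proj j : (Fin n → R) →ₗ[R] R)
          = r (F (LinearMap.proj j : (Fin n → R) →ₗ[R] R)) := (hrF _).symm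
        _ = ∑ i, op (f (Pi.single i 1) j) • r (LinearMap.proj i : (Fin m → R) →ₗ[R] R) := by
            rw [hrep, map_sum]
            simp only [map_smul]
    have h5 : f (fun i => r (LinearMap.proj i : (Fin m → R) →ₗ[R] R) x) j
        = ∑ i, (r (LinearMap.proj i : (Fin m → R) →ₗ[R] R) x) * f (Pi.single i 1) j := by
      have h := dual_eval_eq_sum ((LinearMap.proj j : (Fin n → R) →ₗ[R] R).comp f)
        (fun i => r (LinearMap.proj i : (Fin m → R) →ₗ[R] R) x)
      simpa using h
    have h6 : x j = ∑ i, (r (LinearMap.proj i : (Fin m → R) →ₗ[R] R) x) * f (Pi.single i 1) j := by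
      have h := LinearMap.congr_fun key x
      simpa [LinearMap.smul_apply, MulOpposite.smul_eq_mul_unop, Finset.sum_apply] using h
    rw [h5, ← h6]
  have : LinearMap.range f = ⊤ := LinearMap.range_eq_top.2 hsurj
  have hsub : Subsingleton ((Fin n → R) ⧸ LinearMap.range f) := by
    rw [Submodule.Quotient.subsingleton_iff]
    exact this
  obtain ⟨a, b, hab⟩ := hM
  exact hab (pres.injective (Subsingleton.elim _ _))
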